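/- Let n ≥ 1 and let P_A, P_B, P_C be n×n orthogonal projections satisfying P_A P_C = P_C P_A = P_C and P_B P_C = P_C P_B = P_C. Let M be an n×n complex matrix with M P_A = P_A M = P_A and ‖M − P_A‖ ≤ 1. Define α := 1 − ‖M − P_A‖² and γ := 1 − ‖P_A P_B − P_C‖². Then M P_B M† ≤ (1 − α·γ)·I + α·γ·P_C, i.e. the matrix (1−αγ)·I + αγ·P_C − M P_B M† is positive semidefinite. -/

import Mathlib

open Matrix
open scoped ComplexOrder

noncomputable def opNorm {n : Type*} [Fintype n] [DecidableEq n] (A : Matrix n n ℂ) : ℝ :=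
  ‖Matrix.toEuclideanCLM (𝕜 := ℂ) A‖

section aux
variable {n : ℕ}

lemma dot_conjTranspose_mul_self (X : Matrix (Fin n) (Fin n) ℂ) (x : Fin n → ℂ) :
    star x ⬝ᵥ ((Xᴴ * X) *ᵥ x) =
      ((‖Matrix.toEuclideanCLM (𝕜 := ℂ) X ((WithLp.equiv 2 (Fin n → ℂ)).symm x)‖ ^ 2 : ℝ) : ℂ) := by
  rw [WithLp.equiv_symm_apply, Matrix.toEuclideanCLM_toLp]
  rw [← Matrix.mulVec_mulVec, Matrix.dotProduct_mulVec, ← Matrix.star_mulVec]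
  rw [dotProduct_comm, ← EuclideanSpace.inner_toLp_toLp, inner_self_eq_norm_sq_to_K]
  norm_cast

lemma dot_self_eq (x : Fin n → ℂ) :
    star x ⬝ᵥ x = ((‖(WithLp.equiv 2 (Fin n → ℂ)).symm x‖ ^ 2 : ℝ) : ℂ) := by
  rw [WithLp.equiv_symm_apply, dotProduct_comm, ← EuclideanSpace.inner_toLp_toLp,
    inner_self_eq_norm_sq_to_K]
  norm_cast

lemma isHermitian_smul_one_sub_conj_mul (c : ℝ) (X : Matrix (Fin n) (Fin n) ℂ) :
    ((c : ℂ) • (1 : Matrix (Fin n) (Fin n) ℂ) - Xᴴ * X).IsHermitian := by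
  unfold Matrix.IsHermitian
  simp [Matrix.conjTranspose_smul, Matrix.conjTranspose_mul, Matrix.mul_assoc]

lemma psd_opNorm_sq_smul_one_sub (X : Matrix (Fin n) (Fin n) ℂ) :
    (((opNorm X ^ 2 : ℝ) : ℂ) • (1 : Matrix (Fin n) (Fin n) ℂ) - Xᴴ * X).PosSemidef := by
  refine Matrix.PosSemidef.of_dotProduct_mulVec_nonneg (isHermitian_smul_one_sub_conj_mul _ X) fun x => ?_
  rw [Matrix.sub_mulVec, dotProduct_sub, Matrix.smul_mulVec, Matrix.one_mulVec,
    dotProduct_smul, dot_conjTranspose_mul_self, dot_self_eq, smul_eq_mul]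
  rw [← Complex.ofReal_mul, ← Complex.ofReal_sub, ← Complex.ofReal_zero, Complex.real_le_real]
  have h := (Matrix.toEuclideanCLM (𝕜 := ℂ) X).le_opNorm ((WithLp.equiv 2 (Fin n → ℂ)).symm x)
  have h0 : (0:ℝ) ≤ ‖Matrix.toEuclideanCLM (𝕜 := ℂ) X ((WithLp.equiv 2 (Fin n → ℂ)).symm x)‖ :=
    norm_nonneg _
  have h1 : (0:ℝ) ≤ ‖(WithLp.equiv 2 (Fin n → ℂ)).symm x‖ := norm_nonneg _
  have hop : opNorm X = ‖Matrix.toEuclideanCLM (𝕜 := ℂ) X‖ := rfl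
  rw [hop]
  have h3 := mul_le_mul h h h0 (by positivity)
  nlinarith []

lemma opNorm_sq_le_of_psd {X : Matrix (Fin n) (Fin n) ℂ} {c : ℝ} (hc : 0 ≤ c)
    (h : (((c : ℝ) : ℂ) • (1 : Matrix (Fin n) (Fin n) ℂ) - Xᴴ * X).PosSemidef) :
    opNorm X ^ 2 ≤ c := by
  have hb : ‖Matrix.toEuclideanCLM (𝕜 := ℂ) X‖ ≤ Real.sqrt c := by
    refine ContinuousLinearMap.opNorm_le_bound _ (Real.sqrt_nonneg c) (fun v => ?_)
    set x := WithLp.equiv 2 (Fin n → ℂ) v with hx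
    have hv : v = (WithLp.equiv 2 (Fin n → ℂ)).symm x := rfl
    have h2 := h.dotProduct_mulVec_nonneg x
    rw [Matrix.sub_mulVec, dotProduct_sub, Matrix.smul_mulVec, Matrix.one_mulVec,
      dotProduct_smul, dot_conjTranspose_mul_self, dot_self_eq, smul_eq_mul,
      ← Complex.ofReal_mul, ← Complex.ofReal_sub] at h2
    rw [← Complex.ofReal_zero, Complex.real_le_real] at h2
    rw [hv]
    have h0 : (0:ℝ) ≤ ‖Matrix.toEuclideanCLM (𝕜 := ℂ) X ((WithLp.equiv 2 (Fin n → ℂ)).symm x)‖ :=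
      norm_nonneg _
    have h3 : ‖Matrix.toEuclideanCLM (𝕜 := ℂ) X ((WithLp.equiv 2 (Fin n → ℂ)).symm x)‖ ^ 2 ≤
        (Real.sqrt c * ‖(WithLp.equiv 2 (Fin n → ℂ)).symm x‖) ^ 2 := by
      have : (Real.sqrt c * ‖(WithLp.equiv 2 (Fin n → ℂ)).symm x‖) ^ 2
          = c * ‖(WithLp.equiv 2 (Fin n → ℂ)).symm x‖ ^ 2 := by
        rw [mul_pow, Real.sq_sqrt hc]
      linarith
    have h4 : (0:ℝ) ≤ Real.sqrt c * ‖(WithLp.equiv 2 (Fin n → ℂ)).symm x‖ := by positivity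
    nlinarith []
  calc opNorm X ^ 2 ≤ Real.sqrt c ^ 2 := by
        have h5 : (0:ℝ) ≤ opNorm X := norm_nonneg _
        exact pow_le_pow_left₀ h5 hb 2
    _ = c := Real.sq_sqrt hc

open scoped Matrix.Norms.L2Operator in
lemma opNorm_conjTranspose (X : Matrix (Fin n) (Fin n) ℂ) : opNorm Xᴴ = opNorm X :=
  Matrix.l2_opNorm_conjTranspose X

lemma psd_real_smul {A : Matrix (Fin n) (Fin n) ℂ} {c : ℝ} (hc : 0 ≤ c)
    (hA : A.PosSemidef) : (((c : ℝ) : ℂ) • A).PosSemidef := by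
  refine Matrix.PosSemidef.of_dotProduct_mulVec_nonneg ?_ fun x => ?_
  · unfold Matrix.IsHermitian
    rw [Matrix.conjTranspose_smul, hA.1]
    congr 1
    simp [Complex.star_def, Complex.conj_ofReal]
  · rw [Matrix.smul_mulVec, dotProduct_smul, smul_eq_mul]
    exact mul_nonneg (by exact_mod_cast hc) (hA.dotProduct_mulVec_nonneg x)

lemma psd_of_herm_idem {P : Matrix (Fin n) (Fin n) ℂ} (h1 : Pᴴ = P) (h2 : P * P = P) :
    P.PosSemidef := by
  have h : P = Pᴴ * P := by rw [h1, h2]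
  rw [h]
  exact Matrix.posSemidef_conjTranspose_mul_self P

end aux

theorem sandwich_bound
    (n : ℕ) (hn : 1 ≤ n)
    (PA PB PC : Matrix (Fin n) (Fin n) ℂ)
    (hPA_herm : PAᴴ = PA) (hPA_idem : PA * PA = PA)
    (hPB_herm : PBᴴ = PB) (hPB_idem : PB * PB = PB)
    (hPC_herm : PCᴴ = PC) (hPC_idem : PC * PC = PC)
    (hAC : PA * PC = PC) (hCA : PC * PA = PC)
    (hBC : PB * PC = PC) (hCB : PC * PB = PC)
    (M : Matrix (Fin n) (Fin n) ℂ)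
    (hMA : M * PA = PA) (hAM : PA * M = PA)
    (hMnorm : opNorm (M - PA) ≤ 1) :
    ((((1 - (1 - opNorm (M - PA) ^ 2) * (1 - opNorm (PA * PB - PC) ^ 2) : ℝ)) : ℂ) •
        (1 : Matrix (Fin n) (Fin n) ℂ)
      + (((1 - opNorm (M - PA) ^ 2) * (1 - opNorm (PA * PB - PC) ^ 2) : ℝ) : ℂ) • PC
      - M * PB * Mᴴ).PosSemidef := by
  -- scalar abbreviations
  set r : ℝ := opNorm (M - PA) ^ 2 with hr
  set s : ℝ := opNorm (PA * PB - PC) ^ 2 with hs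
  have hr0 : 0 ≤ r := sq_nonneg _
  have hs0 : 0 ≤ s := sq_nonneg _
  have hr1 : r ≤ 1 := by
    have h0 : (0:ℝ) ≤ opNorm (M - PA) := norm_nonneg _
    nlinarith [hMnorm]
  set β : ℝ := 1 - (1 - r) * (1 - s) with hβ
  have hβ0 : 0 ≤ β := by nlinarith
  -- derived multiplication facts
  have hMC : M * PC = PC := by rw [← hAC, ← mul_assoc, hMA, hAC]
  have hCM : PC * M = PC := by rw [← hCA, mul_assoc, hAM, hCA]
  have hAMH : PA * Mᴴ = PA := by rw [← hPA_herm, ← Matrix.conjTranspose_mul, hMA, hPA_herm]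
  have hMHA : Mᴴ * PA = PA := by rw [← hPA_herm, ← Matrix.conjTranspose_mul, hAM, hPA_herm]
  have hCMH : PC * Mᴴ = PC := by rw [← hPC_herm, ← Matrix.conjTranspose_mul, hMC, hPC_herm]
  have hMHC : Mᴴ * PC = PC := by rw [← hPC_herm, ← Matrix.conjTranspose_mul, hCM, hPC_herm]
  -- parametrized absorption rules
  have rAA : ∀ X : Matrix (Fin n) (Fin n) ℂ, PA * (PA * X) = PA * X :=
    fun X => by rw [← mul_assoc, hPA_idem]
  have rBB : ∀ X : Matrix (Fin n) (Fin n) ℂ, PB * (PB * X) = PB * X :=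
    fun X => by rw [← mul_assoc, hPB_idem]
  have rCC : ∀ X : Matrix (Fin n) (Fin n) ℂ, PC * (PC * X) = PC * X :=
    fun X => by rw [← mul_assoc, hPC_idem]
  have rAC : ∀ X : Matrix (Fin n) (Fin n) ℂ, PA * (PC * X) = PC * X :=
    fun X => by rw [← mul_assoc, hAC]
  have rCA : ∀ X : Matrix (Fin n) (Fin n) ℂ, PC * (PA * X) = PC * X :=
    fun X => by rw [← mul_assoc, hCA]
  have rBC : ∀ X : Matrix (Fin n) (Fin n) ℂ, PB * (PC * X) = PC * X :=
    fun X => by rw [← mul_assoc, hBC]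
  have rCB : ∀ X : Matrix (Fin n) (Fin n) ℂ, PC * (PB * X) = PC * X :=
    fun X => by rw [← mul_assoc, hCB]
  have rMA : ∀ X : Matrix (Fin n) (Fin n) ℂ, M * (PA * X) = PA * X :=
    fun X => by rw [← mul_assoc, hMA]
  have rAM : ∀ X : Matrix (Fin n) (Fin n) ℂ, PA * (M * X) = PA * X :=
    fun X => by rw [← mul_assoc, hAM]
  have rMC : ∀ X : Matrix (Fin n) (Fin n) ℂ, M * (PC * X) = PC * X :=
    fun X => by rw [← mul_assoc, hMC]
  have rCM : ∀ X : Matrix (Fin n) (Fin n) ℂ, PC * (M * X) = PC * X :=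
    fun X => by rw [← mul_assoc, hCM]
  have rAMH : ∀ X : Matrix (Fin n) (Fin n) ℂ, PA * (Mᴴ * X) = PA * X :=
    fun X => by rw [← mul_assoc, hAMH]
  have rMHA : ∀ X : Matrix (Fin n) (Fin n) ℂ, Mᴴ * (PA * X) = PA * X :=
    fun X => by rw [← mul_assoc, hMHA]
  have rCMH : ∀ X : Matrix (Fin n) (Fin n) ℂ, PC * (Mᴴ * X) = PC * X :=
    fun X => by rw [← mul_assoc, hCMH]
  have rMHC : ∀ X : Matrix (Fin n) (Fin n) ℂ, Mᴴ * (PC * X) = PC * X :=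
    fun X => by rw [← mul_assoc, hMHC]
  -- key matrices
  set N : Matrix (Fin n) (Fin n) ℂ := M - PA with hN
  set D : Matrix (Fin n) (Fin n) ℂ := PA * PB - PC with hD
  set K : Matrix (Fin n) (Fin n) ℂ := PB - PC with hK
  set R : Matrix (Fin n) (Fin n) ℂ := 1 - PA with hR
  set RC : Matrix (Fin n) (Fin n) ℂ := 1 - PC with hRC
  set E : Matrix (Fin n) (Fin n) ℂ := M * PB - PC with hE
  have hKH : Kᴴ = K := by
    rw [hK, Matrix.conjTranspose_sub, hPB_herm, hPC_herm]
  have hRH : Rᴴ = R := by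
    rw [hR, Matrix.conjTranspose_sub, Matrix.conjTranspose_one, hPA_herm]
  have hRCH : RCᴴ = RC := by
    rw [hRC, Matrix.conjTranspose_sub, Matrix.conjTranspose_one, hPC_herm]
  have hKK : K * K = K := by
    rw [hK]
    simp only [Matrix.mul_sub, Matrix.sub_mul, hPB_idem, hPC_idem, hBC, hCB]
    abel
  have hKH2 : (1 - K)ᴴ = 1 - K := by
    rw [Matrix.conjTranspose_sub, Matrix.conjTranspose_one, hKH]
  have hKidem2 : (1 - K) * (1 - K) = 1 - K := by
    simp only [Matrix.mul_sub, Matrix.sub_mul, Matrix.mul_one, Matrix.one_mul, hKK]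
    abel
  -- PSD building blocks
  have hP1 : (((r : ℝ) : ℂ) • (1 : Matrix (Fin n) (Fin n) ℂ) - Nᴴ * N).PosSemidef := by
    rw [hr]; exact psd_opNorm_sq_smul_one_sub N
  have hP4 : (((s : ℝ) : ℂ) • (1 : Matrix (Fin n) (Fin n) ℂ) - Dᴴ * D).PosSemidef := by
    rw [hs]; exact psd_opNorm_sq_smul_one_sub D
  have hP1R : (R * ((((r : ℝ) : ℂ) • 1 - Nᴴ * N)) * R).PosSemidef := by
    have := hP1.mul_mul_conjTranspose_same R
    rwa [hRH] at this
  have hP1RK : (K * (R * ((((r : ℝ) : ℂ) • 1 - Nᴴ * N)) * R) * K).PosSemidef := by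
    have := hP1R.mul_mul_conjTranspose_same K
    rwa [hKH] at this
  have hP4K : (K * ((((s : ℝ) : ℂ) • 1 - Dᴴ * D)) * K).PosSemidef := by
    have := hP4.mul_mul_conjTranspose_same K
    rwa [hKH] at this
  have hP4K' : ((((1 - r : ℝ)) : ℂ) • (K * ((((s : ℝ) : ℂ) • 1 - Dᴴ * D)) * K)).PosSemidef :=
    psd_real_smul (by linarith) hP4K
  have hP3 : ((1 : Matrix (Fin n) (Fin n) ℂ) - K).PosSemidef := psd_of_herm_idem hKH2 hKidem2
  have hP3' : (((β : ℝ) : ℂ) • ((1 : Matrix (Fin n) (Fin n) ℂ) - K)).PosSemidef :=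
    psd_real_smul hβ0 hP3
  -- the SOS identity
  have hsum : (((β : ℝ) : ℂ) • (1 : Matrix (Fin n) (Fin n) ℂ) - Eᴴ * E)
      = K * (R * ((((r : ℝ) : ℂ) • 1 - Nᴴ * N)) * R) * K
        + (((1 - r : ℝ) : ℂ) • (K * ((((s : ℝ) : ℂ) • 1 - Dᴴ * D)) * K))
        + (((β : ℝ) : ℂ) • ((1 : Matrix (Fin n) (Fin n) ℂ) - K)) := by
    rw [hE, hN, hD, hK, hR, hβ]
    simp only [Matrix.conjTranspose_sub, Matrix.conjTranspose_mul, Matrix.conjTranspose_one,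
      hPA_herm, hPB_herm, hPC_herm,
      Matrix.mul_sub, Matrix.sub_mul, Matrix.mul_add, Matrix.add_mul,
      smul_sub, smul_add, Matrix.smul_mul, Matrix.mul_smul,
      Matrix.mul_one, Matrix.one_mul, mul_assoc,
      hPA_idem, hPB_idem, hPC_idem, hAC, hCA, hBC, hCB, hMA, hAM, hMC, hCM,
      hAMH, hMHA, hCMH, hMHC,
      rAA, rBB, rCC, rAC, rCA, rBC, rCB, rMA, rAM, rMC, rCM, rAMH, rMHA, rCMH, rMHC]
    match_scalars <;> (push_cast; ring)
  have hT1 : (((β : ℝ) : ℂ) • (1 : Matrix (Fin n) (Fin n) ℂ) - Eᴴ * E).PosSemidef := by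
    rw [hsum]
    exact (hP1RK.add hP4K').add hP3'
  -- norm of E
  have he2 : opNorm E ^ 2 ≤ β := opNorm_sq_le_of_psd hβ0 hT1
  -- E Eᴴ side
  have hEH : ((((opNorm Eᴴ) ^ 2 : ℝ) : ℂ) • (1 : Matrix (Fin n) (Fin n) ℂ)
      - E * Eᴴ).PosSemidef := by
    have := psd_opNorm_sq_smul_one_sub (n := n) Eᴴ
    rwa [Matrix.conjTranspose_conjTranspose] at this
  have hEH2 : opNorm Eᴴ = opNorm E := opNorm_conjTranspose E
  have hscal : ((((β - opNorm E ^ 2 : ℝ)) : ℂ) •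
      (1 : Matrix (Fin n) (Fin n) ℂ)).PosSemidef :=
    psd_real_smul (by linarith) Matrix.PosSemidef.one
  have hT2 : (((β : ℝ) : ℂ) • (1 : Matrix (Fin n) (Fin n) ℂ) - E * Eᴴ).PosSemidef := by
    have hid : (((β : ℝ) : ℂ) • (1 : Matrix (Fin n) (Fin n) ℂ) - E * Eᴴ)
        = (((β - opNorm E ^ 2 : ℝ) : ℂ) • (1 : Matrix (Fin n) (Fin n) ℂ))
          + ((((opNorm Eᴴ) ^ 2 : ℝ) : ℂ) • (1 : Matrix (Fin n) (Fin n) ℂ) - E * Eᴴ) := by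
      rw [hEH2]
      match_scalars <;> (push_cast; ring)
    rw [hid]
    exact hscal.add hEH
  -- conjugate by RC and conclude
  have hfinal := hT2.mul_mul_conjTranspose_same RC
  rw [hRCH] at hfinal
  have hgoal : (RC * ((((β : ℝ) : ℂ) • (1 : Matrix (Fin n) (Fin n) ℂ) - E * Eᴴ)) * RC)
      = (((1 - (1 - r) * (1 - s) : ℝ) : ℂ) • (1 : Matrix (Fin n) (Fin n) ℂ)
        + (((1 - r) * (1 - s) : ℝ) : ℂ) • PC - M * PB * Mᴴ) := by
    rw [hRC, hE, hβ]
    simp only [Matrix.conjTranspose_sub, Matrix.conjTranspose_mul, Matrix.conjTranspose_one,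
      hPA_herm, hPB_herm, hPC_herm,
      Matrix.mul_sub, Matrix.sub_mul, Matrix.mul_add, Matrix.add_mul,
      smul_sub, smul_add, Matrix.smul_mul, Matrix.mul_smul,
      Matrix.mul_one, Matrix.one_mul, mul_assoc,
      hPA_idem, hPB_idem, hPC_idem, hAC, hCA, hBC, hCB, hMA, hAM, hMC, hCM,
      hAMH, hMHA, hCMH, hMHC,
      rAA, rBB, rCC, rAC, rCA, rBC, rCB, rMA, rAM, rMC, rCM, rAMH, rMHA, rCMH, rMHC]
    match_scalars <;> (push_cast; ring)
  rw [hgoal] at hfinal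
  exact hfinal
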